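/- Let P₁, P₂, τ₁, τ₂ > 0 satisfy τ₁·(γ(P₁+P₂) − γ(P₁)) < τ₂·γ(P₁) and τ₂·(γ(P₁+P₂) − γ(P₂)) < τ₁·γ(P₂) (Case II), write a = γ(P₁), b = γ(P₂), s = γ(P₁+P₂), and let U = {(d₁, d₂) : a·d₁ ≥ τ₁, d₁ ≤ d₂, (s−b)·d₁ + b·d₂ ≥ τ₁ + τ₂} ∪ {(d₁, d₂) : b·d₂ ≥ τ₂, d₂ ≤ d₁, a·d₁ + (s−a)·d₂ ≥ τ₁ + τ₂}. Set w₃ = τ₁/(τ₁+τ₂), Ā = (τ₁/a + (a+b−s)·τ₂/(a·b), τ₂/b) and B̄ = (τ₁/a, τ₂/b + (a+b−s)·τ₁/(a·b)). Then Ā ∈ U and B̄ ∈ U, and for every w ∈ [0,1] and every (d₁, d₂) ∈ U: if w ∈ [0, w₃] then w·Ā₁ + (1−w)·Ā₂ ≤ w·d₁ + (1−w)·d₂, and if w ∈ [w₃, 1] then w·B̄₁ + (1−w)·B̄₂ ≤ w·d₁ + (1−w)·d₂. -/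

import Mathlib

/-- γ(x) = (1/2)·log₂(1+x). -/
noncomputable def gam (x : ℝ) : ℝ := (1/2) * Real.logb 2 (1 + x)

lemma gam_pos {x : ℝ} (hx : 0 < x) : 0 < gam x := by
  unfold gam
  have h1 : (1:ℝ) < 1 + x := by linarith
  have := Real.logb_pos (by norm_num : (1:ℝ) < 2) h1
  linarith

lemma gam_subadd {x y : ℝ} (hx : 0 < x) (hy : 0 < y) :
    gam (x + y) ≤ gam x + gam y := by
  unfold gam
  rw [← mul_add]
  have key : Real.logb 2 (1 + (x + y)) ≤ Real.logb 2 ((1 + x) * (1 + y)) :=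
    Real.logb_le_logb_of_le (by norm_num) (by nlinarith) (by nlinarith)
  rw [Real.logb_mul (by nlinarith) (by nlinarith)] at key
  linarith

set_option maxHeartbeats 1000000 in
theorem stmt_15 (P₁ P₂ τ₁ τ₂ a b s : ℝ) (hP₁ : 0 < P₁) (hP₂ : 0 < P₂)
    (hτ₁ : 0 < τ₁) (hτ₂ : 0 < τ₂)
    (ha : a = gam P₁) (hb : b = gam P₂) (hs : s = gam (P₁ + P₂))
    (hcaseA : τ₁ * (s - a) < τ₂ * a) (hcaseB : τ₂ * (s - b) < τ₁ * b)
    (U : Set (ℝ × ℝ))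
    (hU : U = {d : ℝ × ℝ | a * d.1 ≥ τ₁ ∧ d.1 ≤ d.2 ∧
          (s - b) * d.1 + b * d.2 ≥ τ₁ + τ₂} ∪
        {d : ℝ × ℝ | b * d.2 ≥ τ₂ ∧ d.2 ≤ d.1 ∧
          a * d.1 + (s - a) * d.2 ≥ τ₁ + τ₂}) :
    (τ₁ / a + (a + b - s) * τ₂ / (a * b), τ₂ / b) ∈ U ∧
    (τ₁ / a, τ₂ / b + (a + b - s) * τ₁ / (a * b)) ∈ U ∧
    ∀ w : ℝ, w ∈ Set.Icc (0:ℝ) 1 → ∀ d : ℝ × ℝ, d ∈ U →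
      (w ∈ Set.Icc (0:ℝ) (τ₁ / (τ₁ + τ₂)) →
        w * (τ₁ / a + (a + b - s) * τ₂ / (a * b)) + (1 - w) * (τ₂ / b) ≤
          w * d.1 + (1 - w) * d.2) ∧
      (w ∈ Set.Icc (τ₁ / (τ₁ + τ₂)) 1 →
        w * (τ₁ / a) + (1 - w) * (τ₂ / b + (a + b - s) * τ₁ / (a * b)) ≤
          w * d.1 + (1 - w) * d.2) := by
  have ha0 : 0 < a := by rw [ha]; exact gam_pos hP₁
  have hb0 : 0 < b := by rw [hb]; exact gam_pos hP₂
  have hs0 : 0 < s := by rw [hs]; exact gam_pos (by linarith)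
  have habs : s ≤ a + b := by rw [ha, hb, hs]; exact gam_subadd hP₁ hP₂
  subst hU
  have ha' : a ≠ 0 := ha0.ne'
  have hb' : b ≠ 0 := hb0.ne'
  have hs' : s ≠ 0 := hs0.ne'
  have ht0 : 0 < τ₁ + τ₂ := by linarith
  refine ⟨?_, ?_, ?_⟩
  · -- Ā is in the second set
    right
    refine ⟨?_, ?_, ?_⟩
    · simp only [ge_iff_le]
      rw [mul_div_cancel₀ _ hb']
    · have key : τ₁ / a + (a + b - s) * τ₂ / (a * b) - τ₂ / b
          = (τ₁ * b - (s - b) * τ₂) / (a * b) := by field_simp; ring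
      have hpos : 0 ≤ (τ₁ * b - (s - b) * τ₂) / (a * b) :=
        div_nonneg (by nlinarith) (by positivity)
      simp only [Set.mem_setOf_eq] at *
      linarith
    · have key : a * (τ₁ / a + (a + b - s) * τ₂ / (a * b)) + (s - a) * (τ₂ / b)
          = τ₁ + τ₂ := by field_simp; ring
      simp only [Set.mem_setOf_eq, ge_iff_le] at *
      linarith
  · -- B̄ is in the first set
    left
    refine ⟨?_, ?_, ?_⟩
    · simp only [ge_iff_le]
      rw [mul_div_cancel₀ _ ha']
    · have key : τ₂ / b + (a + b - s) * τ₁ / (a * b) - τ₁ / a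
          = (τ₂ * a - (s - a) * τ₁) / (a * b) := by field_simp; ring
      have hpos : 0 ≤ (τ₂ * a - (s - a) * τ₁) / (a * b) :=
        div_nonneg (by nlinarith) (by positivity)
      simp only [Set.mem_setOf_eq] at *
      linarith
    · have key : (s - b) * (τ₁ / a) + b * (τ₂ / b + (a + b - s) * τ₁ / (a * b))
          = τ₁ + τ₂ := by field_simp; ring
      simp only [Set.mem_setOf_eq, ge_iff_le] at *
      linarith
  · intro w hw d hd
    obtain ⟨hw0, hw1⟩ := hw
    -- the four key identities
    have IA : w * d.1 + (1 - w) * d.2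
          - (w * (τ₁ / a + (a + b - s) * τ₂ / (a * b)) + (1 - w) * (τ₂ / b))
        = ((a - w * s) / (a * b)) * (b * d.2 - τ₂)
          + (w / a) * (a * d.1 + (s - a) * d.2 - (τ₁ + τ₂)) := by
      field_simp; ring
    have IB : w * d.1 + (1 - w) * d.2
          - (w * (τ₁ / a) + (1 - w) * (τ₂ / b + (a + b - s) * τ₁ / (a * b)))
        = ((w * s - (s - b)) / (a * b)) * (a * d.1 - τ₁)
          + ((1 - w) / b) * ((s - b) * d.1 + b * d.2 - (τ₁ + τ₂)) := by
      field_simp; ring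
    have IC1 : w * d.1 + (1 - w) * d.2 - (τ₁ + τ₂) / s
        = ((s - w * s - b) / s) * (d.2 - d.1)
          + (1 / s) * ((s - b) * d.1 + b * d.2 - (τ₁ + τ₂)) := by
      field_simp; ring
    have IC2 : w * d.1 + (1 - w) * d.2 - (τ₁ + τ₂) / s
        = ((w * s - a) / s) * (d.1 - d.2)
          + (1 / s) * (a * d.1 + (s - a) * d.2 - (τ₁ + τ₂)) := by
      field_simp; ring
    have J1 : (τ₁ + τ₂) / s
          - (w * (τ₁ / a + (a + b - s) * τ₂ / (a * b)) + (1 - w) * (τ₂ / b))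
        = ((a - w * s) / (s * (a * b))) * (τ₁ * b - (s - b) * τ₂) := by
      field_simp; ring
    have J2 : (w * (τ₁ / a) + (1 - w) * (τ₂ / b + (a + b - s) * τ₁ / (a * b)))
          - (w * (τ₁ / a + (a + b - s) * τ₂ / (a * b)) + (1 - w) * (τ₂ / b))
        = (((1 - w) * τ₁ - w * τ₂) / (a * b)) * (a + b - s) := by
      field_simp; ring
    have J3 : (τ₁ + τ₂) / s
          - (w * (τ₁ / a) + (1 - w) * (τ₂ / b + (a + b - s) * τ₁ / (a * b)))
        = ((w * s - (s - b)) / (s * (a * b))) * (τ₂ * a - (s - a) * τ₁) := by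
      field_simp; ring
    constructor
    · -- w ∈ [0, w₃] : minimum at Ā
      intro hw3
      have hwt : w * (τ₁ + τ₂) ≤ τ₁ := by
        have := hw3.2
        rwa [le_div_iff₀ ht0] at this
      have hws : w * s ≤ a := by
        have h5 : (w * s) * (τ₁ + τ₂) ≤ a * (τ₁ + τ₂) := by
          linarith [mul_le_mul_of_nonneg_right hwt hs0.le, hcaseA]
        exact le_of_mul_le_mul_right h5 ht0
      rcases hd with ⟨h1, h2, h3⟩ | ⟨h1, h2, h3⟩
      · -- d in first set
        simp only [Set.mem_setOf_eq, ge_iff_le] at h1 h2 h3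
        rcases le_or_gt (w * s) (s - b) with hc | hc
        · -- f(d) ≥ (τ₁+τ₂)/s ≥ f(Ā)
          have t1 : 0 ≤ ((s - w * s - b) / s) * (d.2 - d.1) :=
            mul_nonneg (div_nonneg (by linarith) hs0.le) (by linarith)
          have t2 : 0 ≤ (1 / s) * ((s - b) * d.1 + b * d.2 - (τ₁ + τ₂)) :=
            mul_nonneg (by positivity) (by linarith)
          have t3 : 0 ≤ ((a - w * s) / (s * (a * b))) * (τ₁ * b - (s - b) * τ₂) :=
            mul_nonneg (div_nonneg (by linarith) (by positivity)) (by nlinarith)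
          linarith
        · -- f(d) ≥ f(B̄) ≥ f(Ā)
          have t1 : 0 ≤ ((w * s - (s - b)) / (a * b)) * (a * d.1 - τ₁) :=
            mul_nonneg (div_nonneg (by linarith) (by positivity)) (by linarith)
          have t2 : 0 ≤ ((1 - w) / b) * ((s - b) * d.1 + b * d.2 - (τ₁ + τ₂)) :=
            mul_nonneg (div_nonneg (by linarith) hb0.le) (by linarith)
          have t3 : 0 ≤ (((1 - w) * τ₁ - w * τ₂) / (a * b)) * (a + b - s) :=
            mul_nonneg (div_nonneg (by linarith) (by positivity)) (by linarith)
          linarith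
      · -- d in second set : f(d) ≥ f(Ā) directly
        simp only [Set.mem_setOf_eq, ge_iff_le] at h1 h2 h3
        have t1 : 0 ≤ ((a - w * s) / (a * b)) * (b * d.2 - τ₂) :=
          mul_nonneg (div_nonneg (by linarith) (by positivity)) (by linarith)
        have t2 : 0 ≤ (w / a) * (a * d.1 + (s - a) * d.2 - (τ₁ + τ₂)) :=
          mul_nonneg (div_nonneg hw0 ha0.le) (by linarith)
        linarith
    · -- w ∈ [w₃, 1] : minimum at B̄
      intro hw3
      have hwt : τ₁ ≤ w * (τ₁ + τ₂) := by
        have := hw3.1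
        rwa [div_le_iff₀ ht0] at this
      have hws : s - b ≤ w * s := by
        have h5 : (s - b) * (τ₁ + τ₂) ≤ (w * s) * (τ₁ + τ₂) := by
          linarith [mul_le_mul_of_nonneg_right hwt hs0.le, hcaseB]
        exact le_of_mul_le_mul_right h5 ht0
      rcases hd with ⟨h1, h2, h3⟩ | ⟨h1, h2, h3⟩
      · -- d in first set : f(d) ≥ f(B̄) directly
        simp only [Set.mem_setOf_eq, ge_iff_le] at h1 h2 h3
        have t1 : 0 ≤ ((w * s - (s - b)) / (a * b)) * (a * d.1 - τ₁) :=
          mul_nonneg (div_nonneg (by linarith) (by positivity)) (by linarith)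
        have t2 : 0 ≤ ((1 - w) / b) * ((s - b) * d.1 + b * d.2 - (τ₁ + τ₂)) :=
          mul_nonneg (div_nonneg (by linarith) hb0.le) (by linarith)
        linarith
      · -- d in second set
        simp only [Set.mem_setOf_eq, ge_iff_le] at h1 h2 h3
        rcases le_or_gt (w * s) a with hc | hc
        · -- f(d) ≥ f(Ā) ≥ f(B̄)
          have t1 : 0 ≤ ((a - w * s) / (a * b)) * (b * d.2 - τ₂) :=
            mul_nonneg (div_nonneg (by linarith) (by positivity)) (by linarith)
          have t2 : 0 ≤ (w / a) * (a * d.1 + (s - a) * d.2 - (τ₁ + τ₂)) :=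
            mul_nonneg (div_nonneg hw0 ha0.le) (by linarith)
          have t3 : 0 ≤ ((w * τ₂ - (1 - w) * τ₁) / (a * b)) * (a + b - s) :=
            mul_nonneg (div_nonneg (by linarith) (by positivity)) (by linarith)
          have J2' : (w * (τ₁ / a + (a + b - s) * τ₂ / (a * b)) + (1 - w) * (τ₂ / b))
              - (w * (τ₁ / a) + (1 - w) * (τ₂ / b + (a + b - s) * τ₁ / (a * b)))
              = ((w * τ₂ - (1 - w) * τ₁) / (a * b)) * (a + b - s) := by
            field_simp; ring
          linarith
        · -- f(d) ≥ (τ₁+τ₂)/s ≥ f(B̄)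
          have t1 : 0 ≤ ((w * s - a) / s) * (d.1 - d.2) :=
            mul_nonneg (div_nonneg (by linarith) hs0.le) (by linarith)
          have t2 : 0 ≤ (1 / s) * (a * d.1 + (s - a) * d.2 - (τ₁ + τ₂)) :=
            mul_nonneg (by positivity) (by linarith)
          have t3 : 0 ≤ ((w * s - (s - b)) / (s * (a * b))) * (τ₂ * a - (s - a) * τ₁) :=
            mul_nonneg (div_nonneg (by linarith) (by positivity)) (by nlinarith)
          linarith
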